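/- Consider the bilinear form B(x,y) = xᵀGy on ℤ³, where G = [[0,1,5],[1,10,32],[5,32,82]], and set u = (18,−5,1). For vectors a, b ∈ ℤ³, the conditions B(a,a) = 0, B(b,b) = 0, B(a,b) = 1, B(a,u) = 0 and B(b,u) = 0 hold if and only if the (ordered) pair (a,b) is one of: ((1,0,0),(−5,1,0)), ((−5,1,0),(1,0,0)), ((−1,0,0),(5,−1,0)), ((5,−1,0),(−1,0,0)). -/

import Mathlib

open Matrix

/-- The Gram matrix of `H⁶_alg(M,ℤ)` in the basis `(Π, L²ξ, Lξ²)`. -/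
def gramG2 : Matrix (Fin 3) (Fin 3) ℤ := !![0, 1, 5; 1, 10, 32; 5, 32, 82]

/-- The bilinear form `B(x,y) = xᵀ G y` on `ℤ³` given by the Gram matrix. -/
def bG2 (x y : Fin 3 → ℤ) : ℤ := x ⬝ᵥ gramG2.mulVec y

/-- The coordinate vector of `θ(L) = j_*q^*L`. -/
def uG2 : Fin 3 → ℤ := ![18, -5, 1]

/-- Determination of the images of the generators of `H⁰(Y,ℤ)` and `H⁴(Y,ℤ)` under
the Hodge isometry `θ`: the pairs `(a,b)` with `B(a,a) = B(b,b) = 0`, `B(a,b) = 1`,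
`B(a,u) = B(b,u) = 0` are exactly the four listed ones. -/
theorem mukai_generators_G2dagger (a b : Fin 3 → ℤ) :
    (bG2 a a = 0 ∧ bG2 b b = 0 ∧ bG2 a b = 1 ∧ bG2 a uG2 = 0 ∧ bG2 b uG2 = 0) ↔
      ((a = ![1, 0, 0] ∧ b = ![-5, 1, 0]) ∨
       (a = ![-5, 1, 0] ∧ b = ![1, 0, 0]) ∨
       (a = ![-1, 0, 0] ∧ b = ![5, -1, 0]) ∨
       (a = ![5, -1, 0] ∧ b = ![-1, 0, 0])) := by
  constructor
  · rintro ⟨h1, h2, h3, h4, h5⟩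
    simp [bG2, gramG2, uG2, mulVec, dotProduct, Fin.sum_univ_succ] at h1 h2 h3 h4 h5
    rw [h4] at h1 h3
    rw [h5] at h2 h3
    have ha : a 1 * (a 0 + 5 * a 1) = 0 := by ring_nf; ring_nf at h1; linarith
    have hb : b 1 * (b 0 + 5 * b 1) = 0 := by ring_nf; ring_nf at h2; linarith
    have ea : ∀ x y z : ℤ, a 0 = x → a 1 = y → a 2 = z → a = ![x, y, z] := by
      intro x y z hx hy hz; funext i; fin_cases i <;> simpa
    have eb : ∀ x y z : ℤ, b 0 = x → b 1 = y → b 2 = z → b = ![x, y, z] := by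
      intro x y z hx hy hz; funext i; fin_cases i <;> simpa
    rcases mul_eq_zero.mp ha with ha1 | ha2 <;> rcases mul_eq_zero.mp hb with hb1 | hb2
    · exfalso; rw [ha1, hb1] at h3; simp at h3
    · -- a 1 = 0, b 0 = -5 b 1 : h3 becomes a0 * b1 = 1
      have key : a 0 * b 1 = 1 := by
        have : b 0 = -5 * b 1 := by linarith
        rw [ha1, this] at h3; ring_nf at h3 ⊢; linarith
      rcases Int.isUnit_iff.mp (IsUnit.of_mul_eq_one _ key) with h | h
      · left
        have hb1' : b 1 = 1 := by rw [h] at key; linarith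
        exact ⟨ea 1 0 0 h ha1 h4, eb (-5) 1 0 (by linarith) hb1' h5⟩
      · right; right; left
        have hb1' : b 1 = -1 := by rw [h] at key; linarith
        exact ⟨ea (-1) 0 0 h ha1 h4, eb 5 (-1) 0 (by linarith) hb1' h5⟩
    · -- a 0 = -5 a 1, b 1 = 0 : h3 becomes a1 * b0 = 1
      have key : a 1 * b 0 = 1 := by
        have : a 0 = -5 * a 1 := by linarith
        rw [hb1, this] at h3; ring_nf at h3 ⊢; linarith
      rcases Int.isUnit_iff.mp (IsUnit.of_mul_eq_one _ key) with h | h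
      · right; left
        have hb0' : b 0 = 1 := by rw [h] at key; linarith
        exact ⟨ea (-5) 1 0 (by linarith) h h4, eb 1 0 0 hb0' hb1 h5⟩
      · right; right; right
        have hb0' : b 0 = -1 := by rw [h] at key; linarith
        exact ⟨ea 5 (-1) 0 (by linarith) h h4, eb (-1) 0 0 hb0' hb1 h5⟩
    · exfalso
      have e1 : a 0 = -5 * a 1 := by linarith
      have e2 : b 0 = -5 * b 1 := by linarith
      rw [e1, e2] at h3; ring_nf at h3
      omega
  · rintro (⟨ha, hb⟩ | ⟨ha, hb⟩ | ⟨ha, hb⟩ | ⟨ha, hb⟩) <;> subst ha <;> subst hb <;>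
      refine ⟨?_, ?_, ?_, ?_, ?_⟩ <;> decide
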